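/- Let H : ℝ → Matrix (Fin 2) (Fin 2) ℂ be a family of 2 × 2 complex matrices each of whose entries is real-analytic at 0, and suppose H(0) = λ₀·I for some λ₀ ∈ ℂ (the degenerate matrix is a scalar multiple of the identity, hence non-defective). Then there exist C > 0 and δ > 0 such that for every r with |r| < δ, any two eigenvalues λ, μ of H(r) satisfy |λ − μ| ≤ C·|r|. -/

import Mathlib

open Polynomial

lemma charpoly_fin_two' (M : Matrix (Fin 2) (Fin 2) ℂ) :
    M.charpoly = X ^ 2 - C M.trace * X + C M.det := by
  rw [Matrix.charpoly, Matrix.det_fin_two, Matrix.charmatrix_apply_eq,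
    Matrix.charmatrix_apply_eq, Matrix.charmatrix_apply_ne _ _ _ (by decide),
    Matrix.charmatrix_apply_ne _ _ _ (by decide), Matrix.trace_fin_two, Matrix.det_fin_two]
  simp only [map_add, map_sub, map_mul]
  ring

lemma aux_linear_bound (f : ℝ → ℂ) (hf : AnalyticAt ℝ f 0) (h0 : f 0 = 0) :
    ∃ K > (0:ℝ), ∃ δ > (0:ℝ), ∀ r : ℝ, |r| < δ → ‖f r‖ ≤ K * |r| := by
  have h := hf.differentiableAt.isBigO_sub
  rw [Asymptotics.isBigO_iff] at h
  obtain ⟨c, hc⟩ := h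
  rw [Metric.eventually_nhds_iff] at hc
  obtain ⟨δ, hδ, hball⟩ := hc
  refine ⟨|c| + 1, by positivity, δ, hδ, fun r hr => ?_⟩
  have h2 := hball (y := r) (by simpa [Real.dist_eq] using hr)
  simp only [h0, sub_zero, Real.norm_eq_abs] at h2
  calc ‖f r‖ ≤ c * |r| := h2
    _ ≤ (|c| + 1) * |r| := by
        apply mul_le_mul_of_nonneg_right _ (abs_nonneg r)
        linarith [le_abs_self c]

/-- Two-state model at a non-defective degeneracy (`H(0) = λ₀·I`): the gap between the
eigenvalues of `H(r)` grows at most linearly in `|r|` near the degeneracy. -/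
theorem nondefective_degeneracy_linear_gap
    (H : ℝ → Matrix (Fin 2) (Fin 2) ℂ)
    (hA : ∀ i j, AnalyticAt ℝ (fun r => H r i j) 0)
    (lam₀ : ℂ) (h0 : H 0 = lam₀ • (1 : Matrix (Fin 2) (Fin 2) ℂ)) :
    ∃ C > (0 : ℝ), ∃ δ > (0 : ℝ), ∀ r : ℝ, |r| < δ →
      ∀ lam mu : ℂ, ((H r).charpoly).IsRoot lam → ((H r).charpoly).IsRoot mu →
        ‖lam - mu‖ ≤ C * |r| := by
  obtain ⟨K₁, hK₁, δ₁, hδ₁, hb₁⟩ := aux_linear_bound (fun r => H r 0 0 - H r 1 1)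
    ((hA 0 0).sub (hA 1 1)) (by simp [h0, Matrix.one_apply])
  obtain ⟨K₂, hK₂, δ₂, hδ₂, hb₂⟩ := aux_linear_bound (fun r => H r 0 1)
    (hA 0 1) (by simp [h0, Matrix.one_apply])
  obtain ⟨K₃, hK₃, δ₃, hδ₃, hb₃⟩ := aux_linear_bound (fun r => H r 1 0)
    (hA 1 0) (by simp [h0, Matrix.one_apply])
  set K := max K₁ (max K₂ K₃) with hK
  have hKpos : (0:ℝ) < K := lt_of_lt_of_le hK₁ (le_max_left _ _)
  refine ⟨3 * K, by positivity, min δ₁ (min δ₂ δ₃), by positivity, fun r hr lam mu hlam hmu => ?_⟩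
  rcases eq_or_ne lam mu with h | hne
  · simp only [h, sub_self, norm_zero]; positivity
  -- roots of quadratic
  have hcp := charpoly_fin_two' (H r)
  have hl : lam ^ 2 - (H r).trace * lam + (H r).det = 0 := by
    have := hlam; rw [hcp] at this
    simpa [Polynomial.IsRoot] using this
  have hm : mu ^ 2 - (H r).trace * mu + (H r).det = 0 := by
    have := hmu; rw [hcp] at this
    simpa [Polynomial.IsRoot] using this
  have hsum : lam + mu = (H r).trace := by
    have hsub : (lam - mu) * (lam + mu - (H r).trace) = 0 := by
      linear_combination hl - hm
    rcases mul_eq_zero.mp hsub with h | h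
    · exact absurd (sub_eq_zero.mp h) hne
    · exact sub_eq_zero.mp h
  have hprod : lam * mu = (H r).det := by
    have : lam ^ 2 - (lam + mu) * lam + (H r).det = 0 := by rw [hsum]; exact hl
    linear_combination -this
  have key : (lam - mu) ^ 2 =
      (H r 0 0 - H r 1 1) ^ 2 + 4 * (H r 0 1 * H r 1 0) := by
    have ht : (H r).trace = H r 0 0 + H r 1 1 := Matrix.trace_fin_two _
    have hd : (H r).det = H r 0 0 * H r 1 1 - H r 0 1 * H r 1 0 := Matrix.det_fin_two _
    have : (lam - mu) ^ 2 = (lam + mu) ^ 2 - 4 * (lam * mu) := by ring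
    rw [this, hsum, hprod, ht, hd]; ring
  -- bounds
  have hr₁ : |r| < δ₁ := lt_of_lt_of_le hr (min_le_left _ _)
  have hr₂ : |r| < δ₂ := lt_of_lt_of_le hr ((min_le_right _ _).trans (min_le_left _ _))
  have hr₃ : |r| < δ₃ := lt_of_lt_of_le hr ((min_le_right _ _).trans (min_le_right _ _))
  have b₁ : ‖H r 0 0 - H r 1 1‖ ≤ K * |r| :=
    (hb₁ r hr₁).trans (mul_le_mul_of_nonneg_right (le_max_left _ _) (abs_nonneg r))
  have b₂ : ‖H r 0 1‖ ≤ K * |r| :=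
    (hb₂ r hr₂).trans (mul_le_mul_of_nonneg_right
      ((le_max_left _ _).trans (le_max_right _ _)) (abs_nonneg r))
  have b₃ : ‖H r 1 0‖ ≤ K * |r| :=
    (hb₃ r hr₃).trans (mul_le_mul_of_nonneg_right
      ((le_max_right _ _).trans (le_max_right _ _)) (abs_nonneg r))
  have hsq : ‖lam - mu‖ ^ 2 ≤ (3 * K * |r|) ^ 2 := by
    calc ‖lam - mu‖ ^ 2 = ‖(lam - mu) ^ 2‖ := (norm_pow _ _).symm
      _ = ‖(H r 0 0 - H r 1 1) ^ 2 + 4 * (H r 0 1 * H r 1 0)‖ := by rw [key]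
      _ ≤ ‖(H r 0 0 - H r 1 1) ^ 2‖ + ‖4 * (H r 0 1 * H r 1 0)‖ :=
          norm_add_le _ _
      _ = ‖H r 0 0 - H r 1 1‖ ^ 2
          + 4 * (‖H r 0 1‖ * ‖H r 1 0‖) := by
          simp [norm_pow, norm_mul]
      _ ≤ (K * |r|) ^ 2 + 4 * ((K * |r|) * (K * |r|)) := by
          gcongr
      _ ≤ (3 * K * |r|) ^ 2 := by nlinarith [abs_nonneg r, hKpos.le]
  have h3 : (0:ℝ) ≤ 3 * K * |r| := by positivity
  exact (pow_le_pow_iff_left₀ (norm_nonneg _) h3 two_ne_zero).mp hsq |>.trans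
    (le_of_eq (by ring))
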